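/- The measure π_Ψ is an invariant probability distribution for the joint chain: π_Ψ(ψ) > 0 for all ψ ∈ 𝕏, ∑_{ψ∈𝕏} π_Ψ(ψ) = 1, and for every ψ' ∈ 𝕏 one has ∑_{ψ∈𝕏} π_Ψ(ψ)·P(ψ,ψ') = π_Ψ(ψ'). -/

import Mathlib

open scoped BigOperators

noncomputable section

/-- The state space `𝕏 = {(0,q) : q ∈ ℕ} ∪ {(1,q) : q ≥ 1}` of the joint chain,
with the departure indicator encoded as a `Bool`. -/
abbrev XS : Type := {p : Bool × ℕ // p.1 = true → 1 ≤ p.2}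

/-- `ρ = λμ̄/(λ̄μ)`. -/
def rho (lam mu : ℝ) : ℝ := lam * (1 - mu) / ((1 - lam) * mu)

/-- The invariant distribution `π_Q` of the queue-length chain. -/
def piQ (lam mu : ℝ) (q : ℕ) : ℝ :=
  if q = 0 then ((1 - lam) * mu - lam * (1 - mu)) / mu
  else ((1 - lam) * mu - lam * (1 - mu)) / (mu * (1 - mu)) * rho lam mu ^ q

/-- The queue kernel `K` on ℕ. -/
def kerQ (lam mu : ℝ) (q q' : ℕ) : ℝ :=
  if q = 0 then (if q' = 1 then lam else if q' = 0 then 1 - lam else 0)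
  else if q' + 1 = q then (1 - lam) * mu
  else if q' = q + 1 then lam * (1 - mu)
  else if q' = q then 1 - lam * (1 - mu) - (1 - lam) * mu
  else 0

/-- The invariant distribution `π_Ψ` of the joint chain `(ỹ, q)`. -/
def piPsi (lam mu : ℝ) : Bool × ℕ → ℝ
  | (false, 0) => piQ lam mu 0
  | (false, q + 1) => (1 - mu) * piQ lam mu (q + 1)
  | (true, 0) => 0
  | (true, q + 1) => mu * piQ lam mu (q + 1)

/-- The transition kernel `P` of the joint chain: from `(ỹ,q)`, with arrival
`x̃ = q' - q + ỹ ∈ {0,1}` (probability `λ` resp. `λ̄`), the next state is `(ỹ',q')`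
with departure probability `1,0` at `q' = 0` and `μ̄, μ` at `q' ≥ 1`. -/
def kerP (lam mu : ℝ) (ψ ψ' : Bool × ℕ) : ℝ :=
  (if ((ψ'.2 : ℤ) - (ψ.2 : ℤ) + (if ψ.1 then 1 else 0)) = 1 then lam
   else if ((ψ'.2 : ℤ) - (ψ.2 : ℤ) + (if ψ.1 then 1 else 0)) = 0 then 1 - lam
   else 0) *
  (if ψ'.2 = 0 then (if ψ'.1 then 0 else 1) else (if ψ'.1 then mu else 1 - mu))

/-- The `i`-step kernel `P^i` of the joint chain. -/
def kerIter (lam mu : ℝ) : ℕ → Bool × ℕ → Bool × ℕ → ℝ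
  | 0, ψ, ψ' => if ψ = ψ' then 1 else 0
  | i + 1, ψ, ψ' => ∑' ψ'' : XS, kerIter lam mu i ψ ψ''.val * kerP lam mu ψ''.val ψ'

/-- The information-density function `f` on the joint state space. -/
def fInfo (lam mu : ℝ) : Bool × ℕ → ℝ
  | (false, 0) => Real.log (1 / (1 - lam))
  | (false, _ + 1) => Real.log ((1 - mu) / (1 - lam))
  | (true, 0) => 0
  | (true, _ + 1) => Real.log (mu / lam)

/-- The binary entropy function. -/
def Hbin (p : ℝ) : ℝ := -(p * Real.log p) - (1 - p) * Real.log (1 - p)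

/-- The capacity `C = H(λ) - (λ/μ) H(μ)` of the timing channel. -/
def Cap (lam mu : ℝ) : ℝ := Hbin lam - lam / mu * Hbin mu

/-- The constant `c_{M0}`. -/
def cM0 (lam mu : ℝ) : ℝ :=
  (1 - lam) / (1 - mu) *
    (mu * Real.log (mu / lam) + (1 - mu) * Real.log ((1 - mu) / (1 - lam)) - Cap lam mu)

/-- The constant `c_{M̃}`. -/
def cMt (lam mu : ℝ) : ℝ :=
  cM0 lam mu / mu + (Cap lam mu - Real.log (mu / lam)) * piQ lam mu 0 / (1 - mu)

/-- The partial stationary sum `M(q,0) = ∑_{ψ' ∈ 𝕏, q' ≤ q} (C - f(ψ')) π_Ψ(ψ')`. -/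
def M0 (lam mu : ℝ) (q : ℕ) : ℝ :=
  ∑' ψ : {p : Bool × ℕ // (p.1 = true → 1 ≤ p.2) ∧ p.2 ≤ q},
    (Cap lam mu - fInfo lam mu ψ.val) * piPsi lam mu ψ.val

/-- The partial stationary sum
`M(q,1) = ∑_{ψ' ∈ 𝕏 : q' < q, or q' = q and ỹ' = 1} (C - f(ψ')) π_Ψ(ψ')`. -/
def M1 (lam mu : ℝ) (q : ℕ) : ℝ :=
  ∑' ψ : {p : Bool × ℕ // (p.1 = true → 1 ≤ p.2) ∧ (p.2 < q ∨ (p.2 = q ∧ p.1 = true))},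
    (Cap lam mu - fInfo lam mu ψ.val) * piPsi lam mu ψ.val

/-- `r(ψ,i) = ∑_{ψ' ∈ 𝕏} (f(ψ') - C) π_Ψ(ψ') P^i(ψ',ψ)`. -/
def rfun (lam mu : ℝ) (i : ℕ) (ψ : Bool × ℕ) : ℝ :=
  ∑' ψ' : XS, (fInfo lam mu ψ'.val - Cap lam mu) * piPsi lam mu ψ'.val *
    kerIter lam mu i ψ'.val ψ

/-- `R(ψ) = ∑_{i=0}^∞ r(ψ,i)`. -/
def Rfun (lam mu : ℝ) (ψ : Bool × ℕ) : ℝ := ∑' i : ℕ, rfun lam mu i ψ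

/-- The stationary autocovariance
`Cov_i = ∑_{ψ,ψ' ∈ 𝕏} π_Ψ(ψ)(f(ψ)-C)(f(ψ')-C) P^i(ψ,ψ')`. -/
def covI (lam mu : ℝ) (i : ℕ) : ℝ :=
  ∑' p : XS × XS,
    piPsi lam mu p.1.val * (fInfo lam mu p.1.val - Cap lam mu) *
      (fInfo lam mu p.2.val - Cap lam mu) * kerIter lam mu i p.1.val p.2.val

/-- The Lyapunov function `V(ỹ,q) = (q - ỹ)/(μ - λ)`. -/
def Vlya (lam mu : ℝ) (ψ : Bool × ℕ) : ℝ :=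
  ((ψ.2 : ℝ) - (if ψ.1 then 1 else 0)) / (mu - lam)

/-- Stationary path probability `ℙ_n` for block length `n = m+1`:
`π_Ψ(ψ_0) ∏_{l=0}^{n-2} P(ψ_l, ψ_{l+1})`. -/
def pathP (lam mu : ℝ) (m : ℕ) (ψ : Fin (m + 1) → XS) : ℝ :=
  piPsi lam mu (ψ 0).val * ∏ l : Fin m, kerP lam mu (ψ l.castSucc).val (ψ l.succ).val

/-- The partial sum `S_n = ∑_{i=0}^{n-1} f(ψ_i)` along a path, for `n = m+1`. -/
def Spath (lam mu : ℝ) (m : ℕ) (ψ : Fin (m + 1) → XS) : ℝ :=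
  ∑ i : Fin (m + 1), fInfo lam mu (ψ i).val

/-- `Var_n = ∑_paths ℙ_n(path) (S_n - nC)^2`, for `n = m+1`. -/
def VarN (lam mu : ℝ) (m : ℕ) : ℝ :=
  ∑' ψ : Fin (m + 1) → XS,
    pathP lam mu m ψ * (Spath lam mu m ψ - ((m : ℝ) + 1) * Cap lam mu) ^ 2

/-- The explicit stationary variance `V₀` of `f`. -/
def V0 (lam mu : ℝ) : ℝ :=
  Real.log (1 / (1 - lam)) ^ 2 * piQ lam mu 0 +
    Real.log (mu / lam) ^ 2 * mu * (1 - piQ lam mu 0) +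
    Real.log ((1 - mu) / (1 - lam)) ^ 2 * (1 - mu) * (1 - piQ lam mu 0) -
    Cap lam mu ^ 2

/-- The explicit sum of autocovariances `Σ = ∑_{i=0}^∞ Cov_i`. -/
def SigSum (lam mu : ℝ) : ℝ :=
  Real.log (1 / (1 - lam)) *
      (-(cMt lam mu) * rho lam mu / (1 - rho lam mu) - cM0 lam mu * rho lam mu) +
    Real.log (mu / lam) * cM0 lam mu * rho lam mu / (1 - rho lam mu) +
    Real.log ((1 - mu) / (1 - lam)) * (rho lam mu / (1 - rho lam mu)) *
      (cMt lam mu - rho lam mu * cM0 lam mu)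

/-- The asymptotic standard deviation `σ = √(-V₀ + 2Σ)`. -/
def sigmaBE (lam mu : ℝ) : ℝ := Real.sqrt (-(V0 lam mu) + 2 * SigSum lam mu)

/-- The standard normal cumulative distribution function `Φ`. -/
def stdNormCDF (x : ℝ) : ℝ :=
  (Real.sqrt (2 * Real.pi))⁻¹ * ∫ t in Set.Iic x, Real.exp (-(t ^ 2) / 2)

/-- Single-step departure probability `w(ỹ|q)` (queues that have gone negative,
which can only happen on a zero-probability trajectory, are treated like `q = 0`). -/
def wdep (mu : ℝ) (y : Bool) (q : ℤ) : ℝ :=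
  if q ≤ 0 then (if y then 0 else 1) else (if y then mu else 1 - mu)

/-- The queue trajectory `q_i = q_{i-1} + x̃_i - ỹ_{i-1}`, with arrivals `x̃_i = x i`
for `i ≥ 1` and departures `ỹ_i = y i`. -/
def qtraj (q0 : ℕ) (x y : ℕ → Bool) : ℕ → ℤ
  | 0 => (q0 : ℤ)
  | i + 1 => qtraj q0 x y i + (if x (i + 1) then 1 else 0) - (if y i then 1 else 0)

/-- The block channel `W(y|x) = ∏_{i=0}^{n-1} w(ỹ_i|q_i)` of the queue channel. -/
def Wchan (mu : ℝ) (n : ℕ) (q0 : ℕ) (x y : ℕ → Bool) : ℝ :=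
  ∏ i ∈ Finset.range n, wdep mu (y i) (qtraj q0 x y i)

/-- The input distribution `P_X(q_0, x̃) = π_Q(q_0) ∏_{i=1}^{n-1} λ^{x̃_i} λ̄^{1-x̃_i}`. -/
def inpP (lam mu : ℝ) (n : ℕ) (q0 : ℕ) (x : ℕ → Bool) : ℝ :=
  piQ lam mu q0 * ∏ i ∈ Finset.range (n - 1), (if x (i + 1) then lam else 1 - lam)

/-- Extend an arrival word `(x̃_1, …, x̃_m) ∈ {0,1}^m` to a function on ℕ. -/
def extX (m : ℕ) (xf : Fin m → Bool) : ℕ → Bool :=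
  fun i => if h : 1 ≤ i ∧ i ≤ m then xf ⟨i - 1, by omega⟩ else false

/-- Extend an output word `(ỹ_0, …, ỹ_{n-1}) ∈ {0,1}^n` to a function on ℕ. -/
def extY (n : ℕ) (yf : Fin n → Bool) : ℕ → Bool :=
  fun i => if h : i < n then yf ⟨i, h⟩ else false

end
/-- `π_Ψ` is an invariant probability distribution for the joint chain:
it is positive on `𝕏`, sums to one over `𝕏`, and `∑_{ψ∈𝕏} π_Ψ(ψ) P(ψ,ψ') = π_Ψ(ψ')`. -/
/- ===== auxiliary lemmas for the proof ===== -/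

private lemma kerP_vanish (lam mu : ℝ) (b : Bool) (q : ℕ) (y' : Bool) (q' : ℕ)
    (h1 : ((q' : ℤ) - q + (if b then 1 else 0)) ≠ 1)
    (h2 : ((q' : ℤ) - q + (if b then 1 else 0)) ≠ 0) :
    kerP lam mu (b, q) (y', q') = 0 := by
  simp only [kerP]
  rw [if_neg h1, if_neg h2, zero_mul]

private def Sfalse : Set XS := {ψ | ψ.val.1 = false}

private def eqFalse : ℕ ≃ ↥Sfalse where
  toFun q := ⟨⟨(false, q), by simp⟩, rfl⟩
  invFun ψ := ψ.val.val.2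
  left_inv q := rfl
  right_inv := by
    rintro ⟨⟨⟨b, q⟩, hb⟩, hs⟩
    have hbf : b = false := hs
    subst hbf
    rfl

private def eqTrue : ℕ ≃ ↥(Sfalseᶜ) where
  toFun q := ⟨⟨(true, q + 1), fun _ => Nat.succ_le_succ (Nat.zero_le q)⟩, by
    simp [Sfalse]⟩
  invFun ψ := ψ.val.val.2 - 1
  left_inv q := rfl
  right_inv := by
    rintro ⟨⟨⟨b, q⟩, hb⟩, hs⟩
    have hbt : b = true := by
      simpa [Sfalse] using hs
    subst hbt
    have hq : 1 ≤ q := hb rfl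
    refine Subtype.ext (Subtype.ext ?_)
    simp only [Prod.mk.injEq, true_and]
    omega

/-- The key single-step balance identity. -/
private lemma inv_key (lam mu : ℝ) (h0 : 0 < lam) (h1 : lam < mu) (h2 : mu < 1) (n : ℕ) :
    lam * (piPsi lam mu (false, n) + piPsi lam mu (true, n + 1)) +
      (1 - lam) * (piPsi lam mu (false, n + 1) + piPsi lam mu (true, n + 2)) =
    piQ lam mu (n + 1) := by
  have hl : (1 : ℝ) - lam ≠ 0 := by nlinarith
  have hm : mu ≠ 0 := by nlinarith
  have hm1 : (1 : ℝ) - mu ≠ 0 := by nlinarith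
  cases n with
  | zero =>
      simp only [piPsi, piQ, rho]
      norm_num
      field_simp
      ring
  | succ m =>
      simp only [piPsi, piQ, rho]
      norm_num
      have e2 : (lam * (1 - mu) / ((1 - lam) * mu)) ^ (m + 2)
          = (lam * (1 - mu) / ((1 - lam) * mu)) ^ (m + 1) * (lam * (1 - mu) / ((1 - lam) * mu)) := by
        rw [pow_succ]
      have e3 : (lam * (1 - mu) / ((1 - lam) * mu)) ^ (m + 3)
          = (lam * (1 - mu) / ((1 - lam) * mu)) ^ (m + 1) *
            ((lam * (1 - mu) / ((1 - lam) * mu)) * (lam * (1 - mu) / ((1 - lam) * mu))) := by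
        rw [pow_succ, pow_succ]; ring
      rw [e2, e3]
      field_simp
      ring

private lemma inv_key0 (lam mu : ℝ) (h0 : 0 < lam) (h1 : lam < mu) (h2 : mu < 1) :
    (1 - lam) * (piPsi lam mu (false, 0) + piPsi lam mu (true, 1)) = piQ lam mu 0 := by
  have hl : (1 : ℝ) - lam ≠ 0 := by nlinarith
  have hm : mu ≠ 0 := by nlinarith
  have hm1 : (1 : ℝ) - mu ≠ 0 := by nlinarith
  simp only [piPsi, piQ, rho]
  norm_num
  field_simp
  ring
theorem piPsi_invariant_prob (lam mu : ℝ) (h0 : 0 < lam) (h1 : lam < mu) (h2 : mu < 1) :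
    (∀ ψ : XS, 0 < piPsi lam mu ψ.val) ∧
    (∑' ψ : XS, piPsi lam mu ψ.val) = 1 ∧
    (∀ ψ' : XS,
      (∑' ψ : XS, piPsi lam mu ψ.val * kerP lam mu ψ.val ψ'.val) = piPsi lam mu ψ'.val) := by
  have hl0 : (0:ℝ) < 1 - lam := by nlinarith
  have hm0 : (0:ℝ) < mu := by nlinarith
  have hm1 : (0:ℝ) < 1 - mu := by nlinarith
  have hA : (0:ℝ) < (1 - lam) * mu - lam * (1 - mu) := by nlinarith
  have hρ0 : 0 < rho lam mu := by
    have := div_pos (mul_pos h0 hm1) (mul_pos hl0 hm0)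
    simpa [rho] using this
  have hρ1 : rho lam mu < 1 := by
    rw [rho, div_lt_one (mul_pos hl0 hm0)]
    nlinarith
  have hB : (0:ℝ) < ((1 - lam) * mu - lam * (1 - mu)) / (mu * (1 - mu)) :=
    div_pos hA (mul_pos hm0 hm1)
  have hpiQ : ∀ q : ℕ, 0 < piQ lam mu q := by
    intro q
    cases q with
    | zero => simpa [piQ] using div_pos hA hm0
    | succ n =>
        have : 0 < rho lam mu ^ (n+1) := pow_pos hρ0 _
        simpa [piQ] using mul_pos hB this
  refine ⟨?_, ?_, ?_⟩
  · -- positivity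
    rintro ⟨⟨b, q⟩, hb⟩
    cases b with
    | false =>
        cases q with
        | zero => simpa [piPsi] using hpiQ 0
        | succ n => simpa [piPsi] using mul_pos hm1 (hpiQ (n+1))
    | true =>
        cases q with
        | zero => exact absurd (hb rfl) (by omega)
        | succ n => simpa [piPsi] using mul_pos hm0 (hpiQ (n+1))
  · -- sums to one
    have hgeo := hasSum_geometric_of_lt_one hρ0.le hρ1
    have hfs : HasSum (fun n : ℕ => piPsi lam mu (false, n + 1))
        (((1 - mu) * (((1 - lam) * mu - lam * (1 - mu)) / (mu * (1 - mu)) * rho lam mu)) *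
          (1 - rho lam mu)⁻¹) := by
      have hfun : (fun n : ℕ => piPsi lam mu (false, n + 1)) =
          fun n : ℕ => ((1 - mu) * (((1 - lam) * mu - lam * (1 - mu)) / (mu * (1 - mu)) *
            rho lam mu)) * rho lam mu ^ n := by
        funext n
        show (1 - mu) * piQ lam mu (n + 1) = _
        simp only [piQ]
        rw [if_neg (by omega : ¬ n + 1 = 0), pow_succ]
        ring
      rw [hfun]
      exact hgeo.mul_left _
    have hf0 : HasSum (fun n : ℕ => piPsi lam mu (false, n))
        (((1 - mu) * (((1 - lam) * mu - lam * (1 - mu)) / (mu * (1 - mu)) * rho lam mu)) *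
          (1 - rho lam mu)⁻¹ + piQ lam mu 0) := by
      have h' := (hasSum_nat_add_iff (f := fun n : ℕ => piPsi lam mu (false, n)) 1).mp hfs
      rw [Finset.sum_range_one] at h'
      exact h'
    have hts : HasSum (fun n : ℕ => piPsi lam mu (true, n + 1))
        ((mu * (((1 - lam) * mu - lam * (1 - mu)) / (mu * (1 - mu)) * rho lam mu)) *
          (1 - rho lam mu)⁻¹) := by
      have hfun : (fun n : ℕ => piPsi lam mu (true, n + 1)) =
          fun n : ℕ => (mu * (((1 - lam) * mu - lam * (1 - mu)) / (mu * (1 - mu)) *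
            rho lam mu)) * rho lam mu ^ n := by
        funext n
        show mu * piQ lam mu (n + 1) = _
        simp only [piQ]
        rw [if_neg (by omega : ¬ n + 1 = 0), pow_succ]
        ring
      rw [hfun]
      exact hgeo.mul_left _
    have hS1 : HasSum ((fun ψ : XS => piPsi lam mu ψ.val) ∘ (Subtype.val : ↥Sfalse → XS))
        (((1 - mu) * (((1 - lam) * mu - lam * (1 - mu)) / (mu * (1 - mu)) * rho lam mu)) *
          (1 - rho lam mu)⁻¹ + piQ lam mu 0) :=
      eqFalse.hasSum_iff.mp hf0
    have hS2 : HasSum ((fun ψ : XS => piPsi lam mu ψ.val) ∘ (Subtype.val : ↥(Sfalseᶜ) → XS))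
        ((mu * (((1 - lam) * mu - lam * (1 - mu)) / (mu * (1 - mu)) * rho lam mu)) *
          (1 - rho lam mu)⁻¹) :=
      eqTrue.hasSum_iff.mp hts
    have htot := hS1.add_compl hS2
    rw [htot.tsum_eq]
    have hone : 1 - rho lam mu = ((1 - lam) * mu - lam * (1 - mu)) / ((1 - lam) * mu) := by
      rw [rho]
      field_simp
    rw [hone, rho]
    simp only [piQ, if_pos rfl, ↓reduceIte]
    rw [inv_div]
    have hml : mu - lam ≠ 0 := by linarith
    field_simp
    linear_combination mu * inv_mul_cancel₀ hml
  · -- invariance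
    rintro ⟨⟨y', q'⟩, hy⟩
    cases y' with
    | true =>
        cases q' with
        | zero => exact absurd (hy rfl) (by omega)
        | succ n =>
            rw [tsum_eq_sum (s :=
              ({⟨(false, n), by simp⟩, ⟨(false, n+1), by simp⟩,
                ⟨(true, n+1), by simp⟩, ⟨(true, n+2), by simp⟩} : Finset XS)) ?van]
            case van =>
              rintro ⟨⟨b, q⟩, hb⟩ hns
              simp only [Finset.mem_insert, Finset.mem_singleton, Subtype.mk.injEq,
                Prod.mk.injEq] at hns
              push_neg at hns
              obtain ⟨hn1, hn2, hn3, hn4⟩ := hns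
              cases b with
              | false =>
                  have hq1 : q ≠ n := hn1 rfl
                  have hq2 : q ≠ n + 1 := hn2 rfl
                  rw [kerP_vanish lam mu false q true (n+1)
                    (by simp; omega) (by simp; omega), mul_zero]
              | true =>
                  have hq := hb rfl
                  have hq3 : q ≠ n + 1 := hn3 rfl
                  have hq4 : q ≠ n + 2 := hn4 rfl
                  rw [kerP_vanish lam mu true q true (n+1)
                    (by simp; omega) (by simp; omega), mul_zero]
            rw [Finset.sum_insert (by simp [Subtype.ext_iff]),
              Finset.sum_insert (by simp [Subtype.ext_iff]),
              Finset.sum_pair (by simp [Subtype.ext_iff])]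
            rw [show kerP lam mu (false, n) (true, n+1) = lam * mu by norm_num [kerP],
              show kerP lam mu (false, n+1) (true, n+1) = (1 - lam) * mu by norm_num [kerP],
              show kerP lam mu (true, n+1) (true, n+1) = lam * mu by norm_num [kerP],
              show kerP lam mu (true, n+2) (true, n+1) = (1 - lam) * mu by norm_num [kerP]]
            have hpsi : piPsi lam mu (true, n+1) = mu * piQ lam mu (n+1) := rfl
            linear_combination mu * inv_key lam mu h0 h1 h2 n - hpsi
    | false =>
        cases q' with
        | zero =>
            rw [tsum_eq_sum (s :=
              ({⟨(false, 0), by simp⟩, ⟨(true, 1), by simp⟩} : Finset XS)) ?van0]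
            case van0 =>
              rintro ⟨⟨b, q⟩, hb⟩ hns
              simp only [Finset.mem_insert, Finset.mem_singleton, Subtype.mk.injEq,
                Prod.mk.injEq] at hns
              push_neg at hns
              obtain ⟨hn1, hn2⟩ := hns
              cases b with
              | false =>
                  have hq1 : q ≠ 0 := hn1 rfl
                  rw [kerP_vanish lam mu false q false 0
                    (by simp; omega) (by simp; omega), mul_zero]
              | true =>
                  have hq := hb rfl
                  have hq2 : q ≠ 1 := hn2 rfl
                  rw [kerP_vanish lam mu true q false 0
                    (by simp; omega) (by simp; omega), mul_zero]
            rw [Finset.sum_pair (by simp [Subtype.ext_iff])]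
            rw [show kerP lam mu (false, 0) (false, 0) = 1 - lam by norm_num [kerP],
              show kerP lam mu (true, 1) (false, 0) = 1 - lam by norm_num [kerP]]
            have hpsi : piPsi lam mu (false, 0) = piQ lam mu 0 := rfl
            linear_combination inv_key0 lam mu h0 h1 h2 - hpsi
        | succ n =>
            rw [tsum_eq_sum (s :=
              ({⟨(false, n), by simp⟩, ⟨(false, n+1), by simp⟩,
                ⟨(true, n+1), by simp⟩, ⟨(true, n+2), by simp⟩} : Finset XS)) ?van1]
            case van1 =>
              rintro ⟨⟨b, q⟩, hb⟩ hns
              simp only [Finset.mem_insert, Finset.mem_singleton, Subtype.mk.injEq,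
                Prod.mk.injEq] at hns
              push_neg at hns
              obtain ⟨hn1, hn2, hn3, hn4⟩ := hns
              cases b with
              | false =>
                  have hq1 : q ≠ n := hn1 rfl
                  have hq2 : q ≠ n + 1 := hn2 rfl
                  rw [kerP_vanish lam mu false q false (n+1)
                    (by simp; omega) (by simp; omega), mul_zero]
              | true =>
                  have hq := hb rfl
                  have hq3 : q ≠ n + 1 := hn3 rfl
                  have hq4 : q ≠ n + 2 := hn4 rfl
                  rw [kerP_vanish lam mu true q false (n+1)
                    (by simp; omega) (by simp; omega), mul_zero]
            rw [Finset.sum_insert (by simp [Subtype.ext_iff]),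
              Finset.sum_insert (by simp [Subtype.ext_iff]),
              Finset.sum_pair (by simp [Subtype.ext_iff])]
            rw [show kerP lam mu (false, n) (false, n+1) = lam * (1 - mu) by norm_num [kerP],
              show kerP lam mu (false, n+1) (false, n+1) = (1 - lam) * (1 - mu) by norm_num [kerP],
              show kerP lam mu (true, n+1) (false, n+1) = lam * (1 - mu) by norm_num [kerP],
              show kerP lam mu (true, n+2) (false, n+1) = (1 - lam) * (1 - mu) by norm_num [kerP]]
            have hpsi : piPsi lam mu (false, n+1) = (1 - mu) * piQ lam mu (n+1) := rfl
            linear_combination (1 - mu) * inv_key lam mu h0 h1 h2 n - hpsi
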